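/- Let a : ℝ × (0,∞) → ℝ be bounded and measurable, satisfying the one-sided Lipschitz condition a(x₂, t) - a(x₁, t) ≤ C·(x₂ - x₁) for all x₁ ≤ x₂ and t ∈ [t̄, T], where C = C(t̄) ≥ 0. Then any two Filippov solutions y, z of the differential inclusion y'(t) ∈ [a(y(t)+, t), a(y(t)-, t)] with y(t̄) = z(t̄) coincide on [t̄, T]: forward generalized characteristics are unique. -/

import Mathlib

open MeasureTheory intervalIntegral Set Filter


lemma keyLim (a aMinus aPlus : ℝ → ℝ → ℝ) (tbar T C : ℝ) (hC : 0 ≤ C)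
    (hOSL : ∀ x₁ x₂ t, x₁ ≤ x₂ → t ∈ Set.Icc tbar T →
      a x₂ t - a x₁ t ≤ C * (x₂ - x₁))
    (hMinusLim : ∀ x t, Filter.Tendsto (fun ξ => a ξ t)
      (nhdsWithin x (Set.Iio x)) (nhds (aMinus x t)))
    (hPlusLim : ∀ x t, Filter.Tendsto (fun ξ => a ξ t)
      (nhdsWithin x (Set.Ioi x)) (nhds (aPlus x t)))
    (x₁ x₂ t : ℝ) (h12 : x₁ < x₂) (ht : t ∈ Set.Icc tbar T) :
    aMinus x₂ t ≤ aPlus x₁ t + C * (x₂ - x₁) := by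
  have h1 : ∀ η ∈ Ioo x₁ x₂, aMinus x₂ t ≤ a η t + C * (x₂ - x₁) := by
    intro η hη
    refine le_of_tendsto (hMinusLim x₂ t) ?_
    have hev : ∀ᶠ ξ in nhdsWithin x₂ (Iio x₂), η < ξ :=
      ((eventually_gt_nhds hη.2).filter_mono nhdsWithin_le_nhds)
    filter_upwards [hev, self_mem_nhdsWithin] with ξ hξη (hξ : ξ ∈ Iio x₂)
    have h := hOSL η ξ t hξη.le ht
    have h2 : C * (ξ - η) ≤ C * (x₂ - x₁) := by
      apply mul_le_mul_of_nonneg_left _ hC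
      have := hη.1; have := hξ.out; linarith
    linarith
  have h2 : aMinus x₂ t - C * (x₂ - x₁) ≤ aPlus x₁ t := by
    refine ge_of_tendsto (hPlusLim x₁ t) ?_
    have hev : ∀ᶠ η in nhdsWithin x₁ (Ioi x₁), η < x₂ :=
      ((eventually_lt_nhds h12).filter_mono nhdsWithin_le_nhds)
    filter_upwards [hev, self_mem_nhdsWithin] with η hη2 (hη1 : η ∈ Ioi x₁)
    have := h1 η ⟨hη1.out, hη2⟩
    linarith
  linarith

lemma aux9 (a aMinus aPlus : ℝ → ℝ → ℝ) (tbar T C : ℝ)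
    (htT : tbar ≤ T) (hC : 0 ≤ C)
    (hOSL : ∀ x₁ x₂ t, x₁ ≤ x₂ → t ∈ Set.Icc tbar T →
      a x₂ t - a x₁ t ≤ C * (x₂ - x₁))
    (hMinusLim : ∀ x t, Filter.Tendsto (fun ξ => a ξ t)
      (nhdsWithin x (Set.Iio x)) (nhds (aMinus x t)))
    (hPlusLim : ∀ x t, Filter.Tendsto (fun ξ => a ξ t)
      (nhdsWithin x (Set.Ioi x)) (nhds (aPlus x t)))
    (y z y' z' : ℝ → ℝ)
    (hy'int : IntervalIntegrable y' volume tbar T)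
    (hz'int : IntervalIntegrable z' volume tbar T)
    (hyrep : ∀ t ∈ Set.Icc tbar T, y t = y tbar + ∫ s in tbar..t, y' s)
    (hzrep : ∀ t ∈ Set.Icc tbar T, z t = z tbar + ∫ s in tbar..t, z' s)
    (hyFil : ∀ᵐ s ∂(volume.restrict (Set.Icc tbar T)),
      aPlus (y s) s ≤ y' s ∧ y' s ≤ aMinus (y s) s)
    (hzFil : ∀ᵐ s ∂(volume.restrict (Set.Icc tbar T)),
      aPlus (z s) s ≤ z' s ∧ z' s ≤ aMinus (z s) s)
    (hinit : y tbar = z tbar) :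
    ∀ t ∈ Set.Icc tbar T, z t ≤ y t := by
  by_contra hcon
  push_neg at hcon
  obtain ⟨t₀, ht₀, hlt⟩ := hcon
  set w : ℝ → ℝ := fun t => z t - y t with hw
  have hw0 : w tbar = 0 := by simp [hw, hinit]
  have hwcont : ContinuousOn w (Icc tbar T) := by
    have h1 : ContinuousOn (fun t => ∫ s in tbar..t, y' s) (Icc tbar T) := by
      have := intervalIntegral.continuousOn_primitive_interval' hy'int
        (left_mem_uIcc (a := tbar) (b := T))
      rwa [uIcc_of_le htT] at this
    have h2 : ContinuousOn (fun t => ∫ s in tbar..t, z' s) (Icc tbar T) := by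
      have := intervalIntegral.continuousOn_primitive_interval' hz'int
        (left_mem_uIcc (a := tbar) (b := T))
      rwa [uIcc_of_le htT] at this
    have h3 : ContinuousOn
        (fun t => (z tbar + ∫ s in tbar..t, z' s) - (y tbar + ∫ s in tbar..t, y' s))
        (Icc tbar T) := (continuousOn_const.add h2).sub (continuousOn_const.add h1)
    refine h3.congr ?_
    intro t ht
    simp only [hw]
    rw [hyrep t ht, hzrep t ht]
  have hae : ∀ᵐ s ∂(volume.restrict (Icc tbar T)),
      y s < z s → z' s - y' s ≤ C * (z s - y s) := by
    filter_upwards [hyFil, hzFil, ae_restrict_mem measurableSet_Icc] with s hy hz hs hlts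
    have key := keyLim a aMinus aPlus tbar T C hC hOSL hMinusLim hPlusLim (y s) (z s) s hlts hs
    linarith [hy.1, hz.2]
  set S : Set ℝ := {s ∈ Icc tbar t₀ | w s ≤ 0} with hS
  have htbar₀ : tbar ≤ t₀ := ht₀.1
  have hSne : S.Nonempty := ⟨tbar, ⟨⟨le_refl _, htbar₀⟩, hw0.le⟩⟩
  have hSbdd : BddAbove S := ⟨t₀, fun s hs => hs.1.2⟩
  have hSclosed : IsClosed S := by
    have hc : ContinuousOn w (Icc tbar t₀) := hwcont.mono (Icc_subset_Icc le_rfl ht₀.2)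
    have heq : S = Icc tbar t₀ ∩ w ⁻¹' Iic 0 := by ext s; simp [hS]
    rw [heq]
    exact hc.preimage_isClosed_of_isClosed isClosed_Icc isClosed_Iic
  set τ := sSup S with hτ
  have hτS : τ ∈ S := hSclosed.csSup_mem hSne hSbdd
  have hτIcc : τ ∈ Icc tbar t₀ := hτS.1
  have hτle : w τ ≤ 0 := hτS.2
  have hτlt : τ < t₀ := by
    rcases lt_or_eq_of_le hτIcc.2 with h | h
    · exact h
    · exfalso; rw [h] at hτle; simp only [hw] at hτle; linarith
  have hpos : ∀ s ∈ Ioc τ t₀, 0 < w s := by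
    intro s hs
    by_contra hns; push_neg at hns
    have : s ∈ S := ⟨⟨le_trans hτIcc.1 hs.1.le, hs.2⟩, hns⟩
    exact absurd (le_csSup hSbdd this) (not_le.2 hs.1)
  have hτmemT : τ ∈ Icc tbar T := ⟨hτIcc.1, le_trans hτIcc.2 ht₀.2⟩
  have hwτ : w τ = 0 := by
    refine le_antisymm hτle ?_
    have hne : (nhdsWithin τ (Ioo τ t₀)).NeBot := by
      rw [← mem_closure_iff_nhdsWithin_neBot, closure_Ioo hτlt.ne]
      exact left_mem_Icc.2 hτlt.le
    have hsub : Ioo τ t₀ ⊆ Icc tbar T := fun s hs =>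
      ⟨le_trans hτIcc.1 hs.1.le, le_trans hs.2.le (le_trans le_rfl ht₀.2)⟩
    have htd : Tendsto w (nhdsWithin τ (Ioo τ t₀)) (nhds (w τ)) :=
      (hwcont τ hτmemT).mono_left (nhdsWithin_mono τ hsub)
    refine ge_of_tendsto htd ?_
    filter_upwards [self_mem_nhdsWithin] with s hs
    exact (hpos s ⟨hs.1, hs.2.le⟩).le
  -- integrability on subintervals
  have hIsub : ∀ u v : ℝ, tbar ≤ u → u ≤ v → v ≤ T → uIcc u v ⊆ uIcc tbar T := by
    intro u v h1 h2 h3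
    rw [uIcc_of_le h2, uIcc_of_le htT]
    exact Icc_subset_Icc h1 h3
  have hyint' : ∀ t ∈ Icc τ t₀, IntervalIntegrable y' volume τ t := fun t ht' =>
    hy'int.mono_set (hIsub τ t hτIcc.1 ht'.1 (le_trans ht'.2 ht₀.2))
  have hzint' : ∀ t ∈ Icc τ t₀, IntervalIntegrable z' volume τ t := fun t ht' =>
    hz'int.mono_set (hIsub τ t hτIcc.1 ht'.1 (le_trans ht'.2 ht₀.2))
  have hrep : ∀ t ∈ Icc τ t₀, w t = ∫ s in τ..t, (z' s - y' s) := by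
    intro t ht'
    have htT' : t ∈ Icc tbar T := ⟨le_trans hτIcc.1 ht'.1, le_trans ht'.2 ht₀.2⟩
    have Hyt : IntervalIntegrable y' volume tbar t :=
      hy'int.mono_set (hIsub tbar t le_rfl htT'.1 htT'.2)
    have Hyτ : IntervalIntegrable y' volume tbar τ :=
      hy'int.mono_set (hIsub tbar τ le_rfl hτmemT.1 hτmemT.2)
    have Hzt : IntervalIntegrable z' volume tbar t :=
      hz'int.mono_set (hIsub tbar t le_rfl htT'.1 htT'.2)
    have Hzτ : IntervalIntegrable z' volume tbar τ :=
      hz'int.mono_set (hIsub tbar τ le_rfl hτmemT.1 hτmemT.2)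
    have ez : (∫ s in tbar..t, z' s) - (∫ s in tbar..τ, z' s) = ∫ s in τ..t, z' s :=
      intervalIntegral.integral_interval_sub_left Hzt Hzτ
    have ey : (∫ s in tbar..t, y' s) - (∫ s in tbar..τ, y' s) = ∫ s in τ..t, y' s :=
      intervalIntegral.integral_interval_sub_left Hyt Hyτ
    have hwτ' : (z tbar + ∫ s in tbar..τ, z' s) - (y tbar + ∫ s in tbar..τ, y' s) = 0 := by
      rw [← hzrep τ hτmemT, ← hyrep τ hτmemT]; exact hwτ
    have : w t = (z tbar + ∫ s in tbar..t, z' s) - (y tbar + ∫ s in tbar..t, y' s) := by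
      simp only [hw]; rw [hyrep t htT', hzrep t htT']
    rw [this, intervalIntegral.integral_sub (hzint' t ht') (hyint' t ht'), ← ez, ← ey]
    linarith
  -- maximum of w on [τ, t₀]
  have hwc' : ContinuousOn w (Icc τ t₀) := hwcont.mono (Icc_subset_Icc hτIcc.1 ht₀.2)
  obtain ⟨m, hmmem, hm⟩ := isCompact_Icc.exists_isMaxOn (nonempty_Icc.2 hτlt.le) hwc'
  set M := w m with hMdef
  have hMle : ∀ s ∈ Icc τ t₀, w s ≤ M := fun s hs => hm hs
  have hM0 : 0 ≤ M := hwτ ▸ hMle τ (left_mem_Icc.2 hτlt.le)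
  -- Gronwall iteration
  have hind : ∀ n : ℕ, ∀ t ∈ Icc τ t₀, w t ≤ M * (C * (t - τ))^n / n.factorial := by
    intro n
    induction n with
    | zero => intro t ht'; simpa using hMle t ht'
    | succ n ih =>
      intro t ht'
      have hτt : τ ≤ t := ht'.1
      have hsub : Icc τ t ⊆ Icc tbar T := fun s hs =>
        ⟨le_trans hτIcc.1 hs.1, le_trans hs.2 (le_trans ht'.2 ht₀.2)⟩
      have haes : ∀ᵐ s ∂(volume.restrict (Icc τ t)), z' s - y' s ≤ C * w s := by
        have h1 : ∀ᵐ s ∂(volume.restrict (Icc τ t)),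
            y s < z s → z' s - y' s ≤ C * (z s - y s) :=
          ae_restrict_of_ae_restrict_of_subset hsub hae
        have h3 : ∀ᵐ s ∂(volume.restrict (Icc τ t)), s ≠ τ := by
          refine ae_restrict_of_ae ?_
          rw [ae_iff]
          simpa [not_not, Set.setOf_eq_eq_singleton] using measure_singleton (τ : ℝ)
        filter_upwards [h1, ae_restrict_mem measurableSet_Icc, h3] with s hs1 hs2 hs3
        have hsτ : τ < s := lt_of_le_of_ne hs2.1 (Ne.symm hs3)
        have hws : 0 < w s := hpos s ⟨hsτ, le_trans hs2.2 ht'.2⟩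
        have : y s < z s := by simp only [hw, sub_pos] at hws; exact hws
        exact hs1 this
      have hwint : IntervalIntegrable (fun s => C * w s) volume τ t :=
        (continuousOn_const.mul (hwc'.mono (Icc_subset_Icc le_rfl ht'.2))).intervalIntegrable_of_Icc hτt
      have hint1 : w t ≤ ∫ s in τ..t, C * w s := by
        rw [hrep t ht']
        exact intervalIntegral.integral_mono_ae_restrict hτt
          ((hzint' t ht').sub (hyint' t ht')) hwint haes
      have hint2 : (∫ s in τ..t, C * w s)
          ≤ ∫ s in τ..t, C * (M * (C * (s - τ))^n / n.factorial) := by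
        refine intervalIntegral.integral_mono_on hτt hwint ?_ ?_
        · exact (Continuous.intervalIntegrable (by fun_prop) τ t)
        · intro s hs
          exact mul_le_mul_of_nonneg_left (ih s ⟨hs.1, le_trans hs.2 ht'.2⟩) hC
      have hcalc : (∫ s in τ..t, C * (M * (C * (s - τ))^n / n.factorial))
          = M * (C * (t - τ))^(n+1) / (n+1).factorial := by
        have he : (fun s => C * (M * (C * (s - τ))^n / n.factorial))
            = fun s => (C^(n+1) * M / n.factorial) * ((s - τ)^n) := by
          funext s; rw [mul_pow]; ring
        rw [he, intervalIntegral.integral_const_mul]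
        have he2 : (∫ s in τ..t, (s - τ)^n) = ∫ s in (τ - τ)..(t - τ), s^n :=
          intervalIntegral.integral_comp_sub_right (fun s => s^n) τ
        rw [he2, sub_self, integral_pow]
        have hfacpos : (0:ℝ) < n.factorial := by positivity
        rw [Nat.factorial_succ, mul_pow]
        push_cast
        field_simp
        ring
      rw [hcalc] at hint2
      exact hint1.trans hint2
  have hlim : Tendsto (fun n : ℕ => M * (C * (t₀ - τ))^n / n.factorial) atTop (nhds 0) := by
    have h := FloorSemiring.tendsto_pow_div_factorial_atTop (C * (t₀ - τ))
    have := h.const_mul M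
    simpa [mul_div_assoc] using this
  have hfin : w t₀ ≤ 0 :=
    ge_of_tendsto hlim (Filter.Eventually.of_forall fun n =>
      hind n t₀ (right_mem_Icc.2 hτlt.le))
  simp only [hw] at hfin
  linarith


open MeasureTheory intervalIntegral

/-- Proposition 4.4: under a one-sided Lipschitz condition on the
coefficient `a`, forward Filippov (generalized) characteristics are unique:
two Filippov solutions with the same value at `t̄` coincide on `[t̄, T]`. -/
theorem stmt9 (a aMinus aPlus : ℝ → ℝ → ℝ) (tbar T C K : ℝ)
    (htT : tbar ≤ T) (hC : 0 ≤ C)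
    (hbdd : ∀ x t, |a x t| ≤ K)
    (hOSL : ∀ x₁ x₂ t, x₁ ≤ x₂ → t ∈ Set.Icc tbar T →
      a x₂ t - a x₁ t ≤ C * (x₂ - x₁))
    (hMinusLim : ∀ x t, Filter.Tendsto (fun ξ => a ξ t)
      (nhdsWithin x (Set.Iio x)) (nhds (aMinus x t)))
    (hPlusLim : ∀ x t, Filter.Tendsto (fun ξ => a ξ t)
      (nhdsWithin x (Set.Ioi x)) (nhds (aPlus x t)))
    (y z y' z' : ℝ → ℝ)
    (hy'int : IntervalIntegrable y' volume tbar T)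
    (hz'int : IntervalIntegrable z' volume tbar T)
    (hyrep : ∀ t ∈ Set.Icc tbar T, y t = y tbar + ∫ s in tbar..t, y' s)
    (hzrep : ∀ t ∈ Set.Icc tbar T, z t = z tbar + ∫ s in tbar..t, z' s)
    (hyFil : ∀ᵐ s ∂(volume.restrict (Set.Icc tbar T)),
      aPlus (y s) s ≤ y' s ∧ y' s ≤ aMinus (y s) s)
    (hzFil : ∀ᵐ s ∂(volume.restrict (Set.Icc tbar T)),
      aPlus (z s) s ≤ z' s ∧ z' s ≤ aMinus (z s) s)
    (hinit : y tbar = z tbar) :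
    ∀ t ∈ Set.Icc tbar T, y t = z t := by
  intro t ht
  have h1 := aux9 a aMinus aPlus tbar T C htT hC hOSL hMinusLim hPlusLim
    y z y' z' hy'int hz'int hyrep hzrep hyFil hzFil hinit t ht
  have h2 := aux9 a aMinus aPlus tbar T C htT hC hOSL hMinusLim hPlusLim
    z y z' y' hz'int hy'int hzrep hyrep hzFil hyFil hinit.symm t ht
  linarith
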